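/- Let M > 0, λ ≥ 0, δ₁ > 0, and τ̄₀ ∈ ℝ. Let v : ℝ² → ℝ be smooth on ℝ × (−δ₁, δ₁) and satisfy the λ-mode wave equation in outgoing coordinates near null infinity at every point (τ̄,ρ̄) with τ̄ ∈ ℝ and ρ̄ ∈ [0, δ₁). Assume: (i) ∂_τ̄ v(τ̄, 0) = 0 for all τ̄ ≤ τ̄₀; and (ii) there exists T ≤ τ̄₀ such that for every τ̄ ≤ T there is ρ̄′ > 0 with v(τ̄, ρ̄) = 0 for all ρ̄ ∈ [0, ρ̄′). Then v vanishes to infinite order at null infinity for τ̄ ≤ τ̄₀: for every k ∈ ℕ and every τ̄ ≤ τ̄₀, (∂_ρ̄^k v)(τ̄, 0) = 0. (Key step in the proof of Theorem 5.4.) -/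

import Mathlib

open MeasureTheory Filter Set Function
open scoped ContDiff
open scoped Topology

/-- The λ-mode wave equation in outgoing coordinates near null infinity, at the point
`(τ̄,ρ̄)`:
`2·∂_τ̄∂_ρ̄ v + (1−2Mρ̄)·(ρ̄²·∂²_ρ̄ v + ρ̄·∂_ρ̄ v) + (1−4Mρ̄)·ρ̄·∂_ρ̄ v − λ²·v − 2Mρ̄·v = 0`. -/
def NullInftyEqAt (M lam : ℝ) (v : ℝ → ℝ → ℝ) (τ ρ : ℝ) : Prop :=
  2 * deriv (fun s => deriv (fun p => v s p) ρ) τ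
    + (1 - 2*M*ρ) * (ρ^2 * deriv (fun p => deriv (fun q => v τ q) p) ρ
        + ρ * deriv (fun p => v τ p) ρ)
    + (1 - 4*M*ρ) * ρ * deriv (fun p => v τ p) ρ
    - lam^2 * v τ ρ - 2*M*ρ * v τ ρ = 0

namespace NIAux

noncomputable def P1 (f : ℝ × ℝ → ℝ) : ℝ × ℝ → ℝ := fun x => fderiv ℝ f x (1, 0)
noncomputable def P2 (f : ℝ × ℝ → ℝ) : ℝ × ℝ → ℝ := fun x => fderiv ℝ f x (0, 1)

lemma one_le_infty : (1 : WithTop ℕ∞) ≤ ∞ := WithTop.coe_le_coe.2 le_top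
lemma two_le_infty : (2 : WithTop ℕ∞) ≤ ∞ := WithTop.coe_le_coe.2 le_top

variable {f g : ℝ × ℝ → ℝ} {U : Set (ℝ × ℝ)} {k : ℕ}

lemma diffAt (hU : IsOpen U) (hf : ContDiffOn ℝ ∞ f U) {x : ℝ × ℝ} (hx : x ∈ U) :
    DifferentiableAt ℝ f x :=
  (hf.contDiffAt (hU.mem_nhds hx)).differentiableAt (by simp)

lemma contDiffOn_P1 (hU : IsOpen U) (hf : ContDiffOn ℝ ∞ f U) : ContDiffOn ℝ ∞ (P1 f) U :=
  (hf.fderiv_of_isOpen hU (le_of_eq rfl)).clm_apply contDiffOn_const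

lemma contDiffOn_P2 (hU : IsOpen U) (hf : ContDiffOn ℝ ∞ f U) : ContDiffOn ℝ ∞ (P2 f) U :=
  (hf.fderiv_of_isOpen hU (le_of_eq rfl)).clm_apply contDiffOn_const

lemma contDiffOn_iterP2 (hU : IsOpen U) (hf : ContDiffOn ℝ ∞ f U) (k : ℕ) :
    ContDiffOn ℝ ∞ (P2^[k] f) U := by
  induction k generalizing f with
  | zero => exact hf
  | succ k ih =>
    rw [Function.iterate_succ_apply]
    exact ih (contDiffOn_P2 hU hf)

/-- slice in the second variable -/
lemma hasDerivAt_slice2 {τ ρ : ℝ} (h : DifferentiableAt ℝ f (τ, ρ)) :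
    HasDerivAt (fun p => f (τ, p)) (P2 f (τ, ρ)) ρ := by
  have h2 : HasDerivAt (fun p : ℝ => ((τ, p) : ℝ × ℝ)) (0, 1) ρ :=
    (hasDerivAt_const ρ τ).prodMk (hasDerivAt_id ρ)
  exact h.hasFDerivAt.comp_hasDerivAt ρ h2

lemma hasDerivAt_slice1 {τ ρ : ℝ} (h : DifferentiableAt ℝ f (τ, ρ)) :
    HasDerivAt (fun s => f (s, ρ)) (P1 f (τ, ρ)) τ := by
  have h2 : HasDerivAt (fun s : ℝ => ((s, ρ) : ℝ × ℝ)) (1, 0) τ :=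
    (hasDerivAt_id τ).prodMk (hasDerivAt_const τ ρ)
  exact h.hasFDerivAt.comp_hasDerivAt τ h2

lemma deriv_slice2 {τ ρ : ℝ} (h : DifferentiableAt ℝ f (τ, ρ)) :
    deriv (fun p => f (τ, p)) ρ = P2 f (τ, ρ) := (hasDerivAt_slice2 h).deriv

lemma deriv_slice1 {τ ρ : ℝ} (h : DifferentiableAt ℝ f (τ, ρ)) :
    deriv (fun s => f (s, ρ)) τ = P1 f (τ, ρ) := (hasDerivAt_slice1 h).deriv

/-- congruence of iterated `P2` on an open set -/
lemma iterP2_congr (hU : IsOpen U) (h : EqOn f g U) (k : ℕ) :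
    EqOn (P2^[k] f) (P2^[k] g) U := by
  induction k generalizing f g with
  | zero => exact h
  | succ k ih =>
    rw [Function.iterate_succ_apply, Function.iterate_succ_apply]
    refine ih (fun x hx => ?_)
    have : f =ᶠ[𝓝 x] g := Filter.eventuallyEq_of_mem (hU.mem_nhds hx) h
    simp only [P2, this.fderiv_eq]

lemma P2_add (hU : IsOpen U) (hf : ContDiffOn ℝ ∞ f U) (hg : ContDiffOn ℝ ∞ g U) :
    EqOn (P2 (fun y => f y + g y)) (fun y => P2 f y + P2 g y) U := by
  intro x hx
  simp only [P2, fderiv_fun_add (diffAt hU hf hx) (diffAt hU hg hx)]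
  rfl

lemma P2_const_mul (hU : IsOpen U) (hf : ContDiffOn ℝ ∞ f U) (c : ℝ) :
    EqOn (P2 (fun y => c * f y)) (fun y => c * P2 f y) U := by
  intro x hx
  simp only [P2, fderiv_const_mul (diffAt hU hf hx) c]
  rfl

lemma iterP2_add (hU : IsOpen U) (hf : ContDiffOn ℝ ∞ f U) (hg : ContDiffOn ℝ ∞ g U) (k : ℕ) :
    ∀ x ∈ U, P2^[k] (fun y => f y + g y) x = P2^[k] f x + P2^[k] g x := by
  induction k generalizing f g with
  | zero => intro x _; rfl
  | succ k ih =>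
    intro x hx
    rw [Function.iterate_succ_apply,
      iterP2_congr hU (P2_add hU hf hg) k hx,
      ih (contDiffOn_P2 hU hf) (contDiffOn_P2 hU hg) x hx,
      ← Function.iterate_succ_apply, ← Function.iterate_succ_apply]

lemma iterP2_const_mul (hU : IsOpen U) (hf : ContDiffOn ℝ ∞ f U) (c : ℝ) (k : ℕ) :
    ∀ x ∈ U, P2^[k] (fun y => c * f y) x = c * P2^[k] f x := by
  induction k generalizing f with
  | zero => intro x _; rfl
  | succ k ih =>
    intro x hx
    rw [Function.iterate_succ_apply,
      iterP2_congr hU (P2_const_mul hU hf c) k hx,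
      ih (contDiffOn_P2 hU hf) x hx, ← Function.iterate_succ_apply]

/-- Schwarz symmetry of second partials on an open set. -/
lemma P2_P1_comm (hU : IsOpen U) (hf : ContDiffOn ℝ ∞ f U) :
    EqOn (P2 (P1 f)) (P1 (P2 f)) U := by
  intro x hx
  have hsym : IsSymmSndFDerivAt ℝ f x :=
    (hf.contDiffAt (hU.mem_nhds hx)).isSymmSndFDerivAt (by simpa using two_le_infty)
  have hd : DifferentiableAt ℝ (fderiv ℝ f) x :=
    ((hf.fderiv_of_isOpen hU (le_of_eq rfl)).contDiffAt (hU.mem_nhds hx)).differentiableAt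
      (show (∞ : WithTop ℕ∞) ≠ 0 by simp)
  have e1 : fderiv ℝ (fun y => fderiv ℝ f y (1, 0)) x =
      (fderiv ℝ (fderiv ℝ f) x).flip ((1:ℝ), (0:ℝ)) := by
    rw [fderiv_clm_apply hd (differentiableAt_const _)]
    simp
  have e2 : fderiv ℝ (fun y => fderiv ℝ f y (0, 1)) x =
      (fderiv ℝ (fderiv ℝ f) x).flip ((0:ℝ), (1:ℝ)) := by
    rw [fderiv_clm_apply hd (differentiableAt_const _)]
    simp
  show fderiv ℝ (fun y => fderiv ℝ f y (1, 0)) x (0, 1)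
      = fderiv ℝ (fun y => fderiv ℝ f y (0, 1)) x (1, 0)
  rw [e1, e2]
  exact hsym (0, 1) (1, 0)

lemma iterP2_P1 (hU : IsOpen U) (hf : ContDiffOn ℝ ∞ f U) (k : ℕ) :
    ∀ x ∈ U, P2^[k] (P1 f) x = P1 (P2^[k] f) x := by
  induction k generalizing f with
  | zero => intro x _; rfl
  | succ k ih =>
    intro x hx
    rw [Function.iterate_succ_apply,
      iterP2_congr hU (P2_P1_comm hU hf) k hx,
      ih (contDiffOn_P2 hU hf) x hx, ← Function.iterate_succ_apply]

lemma iterP2_add' (hU : IsOpen U) (hf : ContDiffOn ℝ ∞ f U) (hg : ContDiffOn ℝ ∞ g U)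
    {h : ℝ × ℝ → ℝ} (hh : h = fun y => f y + g y) (k : ℕ) {x : ℝ × ℝ} (hx : x ∈ U) :
    P2^[k] h x = P2^[k] f x + P2^[k] g x := by
  subst hh; exact iterP2_add hU hf hg k x hx

lemma iterP2_const_mul' (hU : IsOpen U) (hf : ContDiffOn ℝ ∞ f U) (c : ℝ)
    {h : ℝ × ℝ → ℝ} (hh : h = fun y => c * f y) (k : ℕ) {x : ℝ × ℝ} (hx : x ∈ U) :
    P2^[k] h x = c * P2^[k] f x := by
  subst hh; exact iterP2_const_mul hU hf c k x hx

end NIAux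

namespace NIAux

/-! lemmas specific to the strip `U = univ ×ˢ Ioo (-δ) δ` -/

variable {δ : ℝ} {f g : ℝ × ℝ → ℝ}

def strip (δ : ℝ) : Set (ℝ × ℝ) := (Set.univ : Set ℝ) ×ˢ Set.Ioo (-δ) δ

lemma isOpen_strip : IsOpen (strip δ) := isOpen_univ.prod isOpen_Ioo

lemma mem_strip {τ ρ : ℝ} (h : ρ ∈ Set.Ioo (-δ) δ) : ((τ, ρ) : ℝ × ℝ) ∈ strip δ :=
  ⟨trivial, h⟩

lemma zero_mem_Ioo (hδ : 0 < δ) : (0:ℝ) ∈ Set.Ioo (-δ) δ := ⟨neg_lt_zero.2 hδ, hδ⟩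

/-- iterated `ρ`-derivatives of a slice agree with iterated `P2`. -/
lemma iteratedDeriv_slice (hδ : 0 < δ) (hf : ContDiffOn ℝ ∞ f (strip δ)) (τ : ℝ) (k : ℕ) :
    ∀ ρ ∈ Set.Ioo (-δ) δ, iteratedDeriv k (fun p => f (τ, p)) ρ = P2^[k] f (τ, ρ) := by
  induction k with
  | zero => intro ρ _; rfl
  | succ k ih =>
    intro ρ hρ
    rw [iteratedDeriv_succ]
    have hev : iteratedDeriv k (fun p => f (τ, p)) =ᶠ[𝓝 ρ] fun p => P2^[k] f (τ, p) :=
      Filter.eventuallyEq_of_mem (isOpen_Ioo.mem_nhds hρ) (fun p hp => ih p hp)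
    rw [hev.deriv_eq, deriv_slice2 (diffAt isOpen_strip
      (contDiffOn_iterP2 isOpen_strip hf k) (mem_strip hρ))]
    exact (congrFun (Function.iterate_succ_apply' P2 k f) (τ, ρ)).symm

/-- The key Leibniz computation: `k` `ρ`-derivatives of `ρ·g` at `ρ = 0`. -/
lemma iterP2_mul_snd (hδ : 0 < δ) (hf : ContDiffOn ℝ ∞ f (strip δ)) (k : ℕ) (τ : ℝ) :
    P2^[k] (fun y => y.2 * f y) (τ, 0) = (k:ℝ) * P2^[k-1] f (τ, 0) := by
  induction k generalizing f with
  | zero => simp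
  | succ k ih =>
    have hsnd : ContDiffOn ℝ ∞ (fun y : ℝ × ℝ => y.2) (strip δ) := contDiff_snd.contDiffOn
    have hP2f := contDiffOn_P2 isOpen_strip hf
    have hmul : ContDiffOn ℝ ∞ (fun y : ℝ × ℝ => y.2 * P2 f y) (strip δ) := hsnd.mul hP2f
    have hstep : EqOn (P2 (fun y => y.2 * f y)) (fun y => f y + y.2 * P2 f y) (strip δ) := by
      intro x hx
      have h1 : HasFDerivAt (fun y : ℝ × ℝ => y.2) (ContinuousLinearMap.snd ℝ ℝ ℝ) x :=
        hasFDerivAt_snd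
      have h2 := (diffAt isOpen_strip hf hx).hasFDerivAt
      have := (h1.fun_mul h2).fderiv
      show fderiv ℝ (fun y : ℝ × ℝ => y.2 * f y) x (0,1) = _
      rw [this]
      simp [P2]
      ring
    rw [Function.iterate_succ_apply, iterP2_congr isOpen_strip hstep k (mem_strip (zero_mem_Ioo hδ)),
      iterP2_add isOpen_strip hf hmul k _ (mem_strip (zero_mem_Ioo hδ)),
      ih hP2f]
    rcases k with _ | k
    · simp
    · rw [Nat.succ_sub_one, ← Function.iterate_succ_apply]
      push_cast
      ring

lemma contDiffOn_iteratedDeriv {F : ℝ → ℝ} {s : Set ℝ} (hs : IsOpen s)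
    (hF : ContDiffOn ℝ ∞ F s) (k : ℕ) : ContDiffOn ℝ ∞ (iteratedDeriv k F) s := by
  induction k generalizing F with
  | zero => simpa [iteratedDeriv_zero] using hF
  | succ k ih =>
    rw [iteratedDeriv_succ']
    exact ih (hF.deriv_of_isOpen hs (le_of_eq rfl))

lemma iterP2_mul_snd' (hδ : 0 < δ) (hf : ContDiffOn ℝ ∞ f (strip δ))
    {h : ℝ × ℝ → ℝ} (hh : h = fun y => y.2 * f y) (k : ℕ) (τ : ℝ) :
    P2^[k] h (τ, 0) = (k:ℝ) * P2^[k-1] f (τ, 0) := by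
  subst hh; exact iterP2_mul_snd hδ hf k τ

lemma slice_contDiffOn (hf : ContDiffOn ℝ ∞ f (strip δ)) (τ : ℝ) :
    ContDiffOn ℝ ∞ (fun p => f (τ, p)) (Set.Ioo (-δ) δ) :=
  hf.comp ((contDiff_const.prodMk contDiff_id).contDiffOn) (fun p hp => mem_strip hp)

/-- One-variable fact: a smooth function vanishing on `[0, r)` has all derivatives
vanishing on `[0, r)` (in particular at `0`). -/
lemma oneDim_vanish {F : ℝ → ℝ} {δ r : ℝ} (hδ : 0 < δ) (hr : 0 < r)
    (hF : ContDiffOn ℝ ∞ F (Set.Ioo (-δ) δ)) (h0 : ∀ x ∈ Set.Ico 0 r, F x = 0) (k : ℕ) :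
    iteratedDeriv k F 0 = 0 := by
  set m := min r δ with hm
  have hm0 : 0 < m := lt_min hr hδ
  have hsm : ∀ k, ContDiffOn ℝ ∞ (iteratedDeriv k F) (Set.Ioo (-δ) δ) :=
    fun k => contDiffOn_iteratedDeriv isOpen_Ioo hF k
  have main : ∀ k, ∀ x ∈ Set.Ico (0:ℝ) m, iteratedDeriv k F x = 0 := by
    intro k
    induction k with
    | zero =>
      intro x hx
      exact h0 x ⟨hx.1, lt_of_lt_of_le hx.2 (min_le_left _ _)⟩
    | succ k ih =>
      intro x hx
      have hxIoo : x ∈ Set.Ioo (-δ) δ :=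
        ⟨lt_of_lt_of_le (neg_lt_zero.2 hδ) hx.1, lt_of_lt_of_le hx.2 (min_le_right _ _)⟩
      have hdiff : DifferentiableAt ℝ (iteratedDeriv k F) x :=
        ((hsm k).contDiffAt (isOpen_Ioo.mem_nhds hxIoo)).differentiableAt (by simp)
      have hu : UniqueDiffWithinAt ℝ (Set.Ico (0:ℝ) m) x := (uniqueDiffOn_Ico 0 m) x hx
      rw [iteratedDeriv_succ, ← hdiff.derivWithin hu,
        derivWithin_congr (fun y hy => ih y hy) (ih x hx)]
      exact congrFun (derivWithin_const _ _) x
  exact main k 0 ⟨le_refl 0, hm0⟩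

/-- Constancy of a function with vanishing derivative on a half-line, vanishing in the past. -/
lemma transport {g : ℝ → ℝ} {τ₀ T : ℝ} (hg : ∀ τ : ℝ, DifferentiableAt ℝ g τ)
    (hd : ∀ τ ≤ τ₀, deriv g τ = 0) (hT : T ≤ τ₀) (hp : ∀ τ ≤ T, g τ = 0) :
    ∀ τ ≤ τ₀, g τ = 0 := by
  intro τ hτ
  rcases le_or_gt τ T with h | h
  · exact hp τ h
  · have hdiffOn : DifferentiableOn ℝ g (Set.Icc T τ) := fun x _ => (hg x).differentiableWithinAt
    have hder : ∀ x ∈ Set.Ico T τ, derivWithin g (Set.Icc T τ) x = 0 := by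
      intro x hx
      rw [(hg x).derivWithin ((uniqueDiffOn_Icc h) x ⟨hx.1, hx.2.le⟩)]
      exact hd x (hx.2.le.trans hτ)
    have := constant_of_derivWithin_zero hdiffOn hder τ ⟨h.le, le_refl τ⟩
    rw [this]
    exact hp T (le_refl T)


/-- The wave-operator combination, written in expanded monomial form. -/
noncomputable def HH (M lam : ℝ) (F : ℝ × ℝ → ℝ) : ℝ × ℝ → ℝ := fun y =>
  2 * P1 (P2 F) y
  + (y.2 * (y.2 * P2 (P2 F) y)
  + (-(2*M) * (y.2 * (y.2 * (y.2 * P2 (P2 F) y)))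
  + (2 * (y.2 * P2 F y)
  + (-(6*M) * (y.2 * (y.2 * P2 F y))
  + (-(lam^2) * F y
  + -(2*M) * (y.2 * F y))))))

lemma HH_contDiffOn {δ : ℝ} {F : ℝ × ℝ → ℝ} (hF : ContDiffOn ℝ ∞ F (strip δ)) (M lam : ℝ) :
    ContDiffOn ℝ ∞ (HH M lam F) (strip δ) := by
  have hO : IsOpen (strip δ) := isOpen_strip
  have hG1 := contDiffOn_P2 hO hF
  have hG2 := contDiffOn_P2 hO hG1
  have hP1G1 := contDiffOn_P1 hO hG1
  have hsnd : ContDiffOn ℝ ∞ (fun y : ℝ × ℝ => y.2) (strip δ) := contDiff_snd.contDiffOn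
  unfold HH
  exact (contDiffOn_const.mul hP1G1).add ((hsnd.mul (hsnd.mul hG2)).add
    ((contDiffOn_const.mul (hsnd.mul (hsnd.mul (hsnd.mul hG2)))).add
    ((contDiffOn_const.mul (hsnd.mul hG1)).add
    ((contDiffOn_const.mul (hsnd.mul (hsnd.mul hG1))).add
    ((contDiffOn_const.mul hF).add (contDiffOn_const.mul (hsnd.mul hF)))))))

lemma iterP2_HH {δ : ℝ} (hδ : 0 < δ) {F : ℝ × ℝ → ℝ} (hF : ContDiffOn ℝ ∞ F (strip δ))
    (M lam : ℝ) (k : ℕ) (τ : ℝ) :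
    P2^[k] (HH M lam F) (τ, 0)
      = 2 * P1 (P2^[k+1] F) (τ, 0)
      + ((k:ℝ) * (((k-1:ℕ):ℝ) * P2^[k-1-1] (P2 (P2 F)) (τ, 0))
      + (-(2*M) * ((k:ℝ) * (((k-1:ℕ):ℝ) * (((k-1-1:ℕ):ℝ) * P2^[k-1-1-1] (P2 (P2 F)) (τ, 0))))
      + (2 * ((k:ℝ) * P2^[k-1] (P2 F) (τ, 0))
      + (-(6*M) * ((k:ℝ) * (((k-1:ℕ):ℝ) * P2^[k-1-1] (P2 F) (τ, 0)))
      + (-(lam^2) * P2^[k] F (τ, 0)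
      + -(2*M) * ((k:ℝ) * P2^[k-1] F (τ, 0))))))) := by
  have hO : IsOpen (strip δ) := isOpen_strip
  have z0 : ((τ, 0) : ℝ × ℝ) ∈ strip δ := mem_strip (zero_mem_Ioo hδ)
  have hG1 := contDiffOn_P2 hO hF
  have hG2 := contDiffOn_P2 hO hG1
  have hP1G1 := contDiffOn_P1 hO hG1
  have hsnd : ContDiffOn ℝ ∞ (fun y : ℝ × ℝ => y.2) (strip δ) := contDiff_snd.contDiffOn
  have cT1 : ContDiffOn ℝ ∞ (fun y : ℝ × ℝ => 2 * P1 (P2 F) y) (strip δ) :=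
    contDiffOn_const.mul hP1G1
  have cB2 : ContDiffOn ℝ ∞ (fun y : ℝ × ℝ => y.2 * P2 (P2 F) y) (strip δ) := hsnd.mul hG2
  have cT2 : ContDiffOn ℝ ∞ (fun y : ℝ × ℝ => y.2 * (y.2 * P2 (P2 F) y)) (strip δ) :=
    hsnd.mul cB2
  have cB3 : ContDiffOn ℝ ∞ (fun y : ℝ × ℝ => y.2 * (y.2 * (y.2 * P2 (P2 F) y))) (strip δ) :=
    hsnd.mul cT2
  have cT3 : ContDiffOn ℝ ∞
      (fun y : ℝ × ℝ => -(2*M) * (y.2 * (y.2 * (y.2 * P2 (P2 F) y)))) (strip δ) :=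
    contDiffOn_const.mul cB3
  have cB4 : ContDiffOn ℝ ∞ (fun y : ℝ × ℝ => y.2 * P2 F y) (strip δ) := hsnd.mul hG1
  have cT4 : ContDiffOn ℝ ∞ (fun y : ℝ × ℝ => 2 * (y.2 * P2 F y)) (strip δ) :=
    contDiffOn_const.mul cB4
  have cB5 : ContDiffOn ℝ ∞ (fun y : ℝ × ℝ => y.2 * (y.2 * P2 F y)) (strip δ) := hsnd.mul cB4
  have cT5 : ContDiffOn ℝ ∞ (fun y : ℝ × ℝ => -(6*M) * (y.2 * (y.2 * P2 F y))) (strip δ) :=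
    contDiffOn_const.mul cB5
  have cT6 : ContDiffOn ℝ ∞ (fun y : ℝ × ℝ => -(lam^2) * F y) (strip δ) :=
    contDiffOn_const.mul hF
  have cB7 : ContDiffOn ℝ ∞ (fun y : ℝ × ℝ => y.2 * F y) (strip δ) := hsnd.mul hF
  have cT7 : ContDiffOn ℝ ∞ (fun y : ℝ × ℝ => -(2*M) * (y.2 * F y)) (strip δ) :=
    contDiffOn_const.mul cB7
  have cR6 : ContDiffOn ℝ ∞
      (fun y : ℝ × ℝ => -(lam^2) * F y + -(2*M) * (y.2 * F y)) (strip δ) := cT6.add cT7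
  have cR5 : ContDiffOn ℝ ∞
      (fun y : ℝ × ℝ => -(6*M) * (y.2 * (y.2 * P2 F y))
        + (-(lam^2) * F y + -(2*M) * (y.2 * F y))) (strip δ) := cT5.add cR6
  have cR4 : ContDiffOn ℝ ∞
      (fun y : ℝ × ℝ => 2 * (y.2 * P2 F y) + (-(6*M) * (y.2 * (y.2 * P2 F y))
        + (-(lam^2) * F y + -(2*M) * (y.2 * F y)))) (strip δ) := cT4.add cR5
  have cR3 : ContDiffOn ℝ ∞
      (fun y : ℝ × ℝ => -(2*M) * (y.2 * (y.2 * (y.2 * P2 (P2 F) y)))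
        + (2 * (y.2 * P2 F y) + (-(6*M) * (y.2 * (y.2 * P2 F y))
        + (-(lam^2) * F y + -(2*M) * (y.2 * F y))))) (strip δ) := cT3.add cR4
  have cR2 : ContDiffOn ℝ ∞
      (fun y : ℝ × ℝ => y.2 * (y.2 * P2 (P2 F) y)
        + (-(2*M) * (y.2 * (y.2 * (y.2 * P2 (P2 F) y)))
        + (2 * (y.2 * P2 F y) + (-(6*M) * (y.2 * (y.2 * P2 F y))
        + (-(lam^2) * F y + -(2*M) * (y.2 * F y)))))) (strip δ) := cT2.add cR3
  have u1 : P2^[k] (HH M lam F) (τ, 0)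
      = P2^[k] (fun y : ℝ × ℝ => 2 * P1 (P2 F) y) (τ, 0)
      + P2^[k] (fun y : ℝ × ℝ => y.2 * (y.2 * P2 (P2 F) y)
        + (-(2*M) * (y.2 * (y.2 * (y.2 * P2 (P2 F) y)))
        + (2 * (y.2 * P2 F y) + (-(6*M) * (y.2 * (y.2 * P2 F y))
        + (-(lam^2) * F y + -(2*M) * (y.2 * F y)))))) (τ, 0) :=
    iterP2_add hO cT1 cR2 k _ z0
  have u2 : P2^[k] (fun y : ℝ × ℝ => y.2 * (y.2 * P2 (P2 F) y)
        + (-(2*M) * (y.2 * (y.2 * (y.2 * P2 (P2 F) y)))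
        + (2 * (y.2 * P2 F y) + (-(6*M) * (y.2 * (y.2 * P2 F y))
        + (-(lam^2) * F y + -(2*M) * (y.2 * F y)))))) (τ, 0)
      = P2^[k] (fun y : ℝ × ℝ => y.2 * (y.2 * P2 (P2 F) y)) (τ, 0)
      + P2^[k] (fun y : ℝ × ℝ => -(2*M) * (y.2 * (y.2 * (y.2 * P2 (P2 F) y)))
        + (2 * (y.2 * P2 F y) + (-(6*M) * (y.2 * (y.2 * P2 F y))
        + (-(lam^2) * F y + -(2*M) * (y.2 * F y))))) (τ, 0) :=
    iterP2_add hO cT2 cR3 k _ z0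
  have u3 : P2^[k] (fun y : ℝ × ℝ => -(2*M) * (y.2 * (y.2 * (y.2 * P2 (P2 F) y)))
        + (2 * (y.2 * P2 F y) + (-(6*M) * (y.2 * (y.2 * P2 F y))
        + (-(lam^2) * F y + -(2*M) * (y.2 * F y))))) (τ, 0)
      = P2^[k] (fun y : ℝ × ℝ => -(2*M) * (y.2 * (y.2 * (y.2 * P2 (P2 F) y)))) (τ, 0)
      + P2^[k] (fun y : ℝ × ℝ => 2 * (y.2 * P2 F y) + (-(6*M) * (y.2 * (y.2 * P2 F y))
        + (-(lam^2) * F y + -(2*M) * (y.2 * F y)))) (τ, 0) :=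
    iterP2_add hO cT3 cR4 k _ z0
  have u4 : P2^[k] (fun y : ℝ × ℝ => 2 * (y.2 * P2 F y) + (-(6*M) * (y.2 * (y.2 * P2 F y))
        + (-(lam^2) * F y + -(2*M) * (y.2 * F y)))) (τ, 0)
      = P2^[k] (fun y : ℝ × ℝ => 2 * (y.2 * P2 F y)) (τ, 0)
      + P2^[k] (fun y : ℝ × ℝ => -(6*M) * (y.2 * (y.2 * P2 F y))
        + (-(lam^2) * F y + -(2*M) * (y.2 * F y))) (τ, 0) :=
    iterP2_add hO cT4 cR5 k _ z0
  have u5 : P2^[k] (fun y : ℝ × ℝ => -(6*M) * (y.2 * (y.2 * P2 F y))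
        + (-(lam^2) * F y + -(2*M) * (y.2 * F y))) (τ, 0)
      = P2^[k] (fun y : ℝ × ℝ => -(6*M) * (y.2 * (y.2 * P2 F y))) (τ, 0)
      + P2^[k] (fun y : ℝ × ℝ => -(lam^2) * F y + -(2*M) * (y.2 * F y)) (τ, 0) :=
    iterP2_add hO cT5 cR6 k _ z0
  have u6 : P2^[k] (fun y : ℝ × ℝ => -(lam^2) * F y + -(2*M) * (y.2 * F y)) (τ, 0)
      = P2^[k] (fun y : ℝ × ℝ => -(lam^2) * F y) (τ, 0)
      + P2^[k] (fun y : ℝ × ℝ => -(2*M) * (y.2 * F y)) (τ, 0) :=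
    iterP2_add hO cT6 cT7 k _ z0
  have t1 : P2^[k] (fun y : ℝ × ℝ => 2 * P1 (P2 F) y) (τ, 0)
      = 2 * P1 (P2^[k+1] F) (τ, 0) := by
    have a : P2^[k] (fun y : ℝ × ℝ => 2 * P1 (P2 F) y) (τ, 0)
        = 2 * P2^[k] (P1 (P2 F)) (τ, 0) := iterP2_const_mul hO hP1G1 2 k _ z0
    rw [a, iterP2_P1 hO hG1 k _ z0, ← Function.iterate_succ_apply]
  have t2 : P2^[k] (fun y : ℝ × ℝ => y.2 * (y.2 * P2 (P2 F) y)) (τ, 0)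
      = (k:ℝ) * (((k-1:ℕ):ℝ) * P2^[k-1-1] (P2 (P2 F)) (τ, 0)) := by
    have a : P2^[k] (fun y : ℝ × ℝ => y.2 * (y.2 * P2 (P2 F) y)) (τ, 0)
        = (k:ℝ) * P2^[k-1] (fun y : ℝ × ℝ => y.2 * P2 (P2 F) y) (τ, 0) :=
      iterP2_mul_snd hδ cB2 k τ
    rw [a, iterP2_mul_snd hδ hG2 (k-1) τ]
  have t3 : P2^[k] (fun y : ℝ × ℝ => -(2*M) * (y.2 * (y.2 * (y.2 * P2 (P2 F) y)))) (τ, 0)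
      = -(2*M) * ((k:ℝ) * (((k-1:ℕ):ℝ) * (((k-1-1:ℕ):ℝ)
          * P2^[k-1-1-1] (P2 (P2 F)) (τ, 0)))) := by
    have a : P2^[k] (fun y : ℝ × ℝ => -(2*M) * (y.2 * (y.2 * (y.2 * P2 (P2 F) y)))) (τ, 0)
        = -(2*M) * P2^[k] (fun y : ℝ × ℝ => y.2 * (y.2 * (y.2 * P2 (P2 F) y))) (τ, 0) :=
      iterP2_const_mul hO cB3 _ k _ z0
    have b : P2^[k] (fun y : ℝ × ℝ => y.2 * (y.2 * (y.2 * P2 (P2 F) y))) (τ, 0)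
        = (k:ℝ) * P2^[k-1] (fun y : ℝ × ℝ => y.2 * (y.2 * P2 (P2 F) y)) (τ, 0) :=
      iterP2_mul_snd hδ cT2 k τ
    have c : P2^[k-1] (fun y : ℝ × ℝ => y.2 * (y.2 * P2 (P2 F) y)) (τ, 0)
        = ((k-1:ℕ):ℝ) * P2^[k-1-1] (fun y : ℝ × ℝ => y.2 * P2 (P2 F) y) (τ, 0) :=
      iterP2_mul_snd hδ cB2 (k-1) τ
    rw [a, b, c, iterP2_mul_snd hδ hG2 (k-1-1) τ]
  have t4 : P2^[k] (fun y : ℝ × ℝ => 2 * (y.2 * P2 F y)) (τ, 0)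
      = 2 * ((k:ℝ) * P2^[k-1] (P2 F) (τ, 0)) := by
    have a : P2^[k] (fun y : ℝ × ℝ => 2 * (y.2 * P2 F y)) (τ, 0)
        = 2 * P2^[k] (fun y : ℝ × ℝ => y.2 * P2 F y) (τ, 0) :=
      iterP2_const_mul hO cB4 2 k _ z0
    rw [a, iterP2_mul_snd hδ hG1 k τ]
  have t5 : P2^[k] (fun y : ℝ × ℝ => -(6*M) * (y.2 * (y.2 * P2 F y))) (τ, 0)
      = -(6*M) * ((k:ℝ) * (((k-1:ℕ):ℝ) * P2^[k-1-1] (P2 F) (τ, 0))) := by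
    have a : P2^[k] (fun y : ℝ × ℝ => -(6*M) * (y.2 * (y.2 * P2 F y))) (τ, 0)
        = -(6*M) * P2^[k] (fun y : ℝ × ℝ => y.2 * (y.2 * P2 F y)) (τ, 0) :=
      iterP2_const_mul hO cB5 _ k _ z0
    have b : P2^[k] (fun y : ℝ × ℝ => y.2 * (y.2 * P2 F y)) (τ, 0)
        = (k:ℝ) * P2^[k-1] (fun y : ℝ × ℝ => y.2 * P2 F y) (τ, 0) :=
      iterP2_mul_snd hδ cB4 k τ
    rw [a, b, iterP2_mul_snd hδ hG1 (k-1) τ]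
  have t6 : P2^[k] (fun y : ℝ × ℝ => -(lam^2) * F y) (τ, 0)
      = -(lam^2) * P2^[k] F (τ, 0) := iterP2_const_mul hO hF _ k _ z0
  have t7 : P2^[k] (fun y : ℝ × ℝ => -(2*M) * (y.2 * F y)) (τ, 0)
      = -(2*M) * ((k:ℝ) * P2^[k-1] F (τ, 0)) := by
    have a : P2^[k] (fun y : ℝ × ℝ => -(2*M) * (y.2 * F y)) (τ, 0)
        = -(2*M) * P2^[k] (fun y : ℝ × ℝ => y.2 * F y) (τ, 0) :=
      iterP2_const_mul hO cB7 _ k _ z0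
    rw [a, iterP2_mul_snd hδ hF k τ]
  rw [u1, u2, u3, u4, u5, u6, t1, t2, t3, t4, t5, t6, t7]

end NIAux

open NIAux

/-- Key step in the proof of Theorem 5.4: a smooth solution of the λ-mode equation near
null infinity whose radiation field vanishes for `τ̄ ≤ τ̄₀` and which vanishes near
`{ρ̄ = 0}` in the far past vanishes to infinite order at null infinity for `τ̄ ≤ τ̄₀`. -/
theorem infinite_order_vanishing_at_null_infinity
    (M lam δ₁ τ₀ : ℝ) (hM : 0 < M) (hlam : 0 ≤ lam) (hδ₁ : 0 < δ₁)
    (v : ℝ → ℝ → ℝ)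
    (hv : ContDiffOn ℝ ∞ (Function.uncurry v) ((Set.univ : Set ℝ) ×ˢ Set.Ioo (-δ₁) δ₁))
    (heq : ∀ τ ρ : ℝ, ρ ∈ Set.Ico 0 δ₁ → NullInftyEqAt M lam v τ ρ)
    (h1 : ∀ τ : ℝ, τ ≤ τ₀ → deriv (fun s => v s 0) τ = 0)
    (h2 : ∃ T : ℝ, T ≤ τ₀ ∧ ∀ τ : ℝ, τ ≤ T → ∃ ρ' : ℝ, 0 < ρ' ∧
      ∀ ρ ∈ Set.Ico (0:ℝ) ρ', v τ ρ = 0) :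
    ∀ k : ℕ, ∀ τ : ℝ, τ ≤ τ₀ → iteratedDeriv k (fun ρ => v τ ρ) 0 = 0 := by
  obtain ⟨T, hTτ₀, h2'⟩ := h2
  have hO : IsOpen (strip δ₁) := isOpen_strip
  let F : ℝ × ℝ → ℝ := Function.uncurry v
  have hvU : ContDiffOn ℝ ∞ F (strip δ₁) := hv
  have hG1 : ContDiffOn ℝ ∞ (P2 F) (strip δ₁) := contDiffOn_P2 hO hvU
  have hHcd : ContDiffOn ℝ ∞ (HH M lam F) (strip δ₁) := HH_contDiffOn hvU M lam
  have hveq : ∀ a b : ℝ, v a b = F (a, b) := fun _ _ => rfl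
  -- the equation in terms of `HH`
  have hHeq : ∀ τ ρ : ℝ, ρ ∈ Set.Ico 0 δ₁ → HH M lam F (τ, ρ) = 0 := by
    intro τ ρ hρ
    have hρI : ρ ∈ Set.Ioo (-δ₁) δ₁ := ⟨lt_of_lt_of_le (neg_lt_zero.2 hδ₁) hρ.1, hρ.2⟩
    have E := heq τ ρ hρ
    unfold NullInftyEqAt at E
    have e1 : deriv (fun s => deriv (fun p => v s p) ρ) τ = P1 (P2 F) (τ, ρ) := by
      have hfun : (fun s => deriv (fun p => v s p) ρ) = fun s => P2 F (s, ρ) :=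
        funext fun s => deriv_slice2 (diffAt hO hvU (mem_strip hρI))
      rw [hfun]
      exact deriv_slice1 (diffAt hO hG1 (mem_strip hρI))
    have e2 : deriv (fun p => deriv (fun q => v τ q) p) ρ = P2 (P2 F) (τ, ρ) := by
      have hev : (fun p => deriv (fun q => v τ q) p) =ᶠ[𝓝 ρ] fun p => P2 F (τ, p) :=
        Filter.eventuallyEq_of_mem (isOpen_Ioo.mem_nhds hρI)
          (fun p hp => deriv_slice2 (diffAt hO hvU (mem_strip hp)))
      rw [hev.deriv_eq]
      exact deriv_slice2 (diffAt hO hG1 (mem_strip hρI))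
    have e3 : deriv (fun p => v τ p) ρ = P2 F (τ, ρ) :=
      deriv_slice2 (diffAt hO hvU (mem_strip hρI))
    rw [e1, e2, e3, hveq τ ρ] at E
    show 2 * P1 (P2 F) (τ, ρ)
      + (ρ * (ρ * P2 (P2 F) (τ, ρ))
      + (-(2*M) * (ρ * (ρ * (ρ * P2 (P2 F) (τ, ρ))))
      + (2 * (ρ * P2 F (τ, ρ))
      + (-(6*M) * (ρ * (ρ * P2 F (τ, ρ)))
      + (-(lam^2) * F (τ, ρ)
      + -(2*M) * (ρ * F (τ, ρ))))))) = 0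
    linear_combination E
  -- all `ρ`-derivatives of `HH` vanish on the axis
  have hHk : ∀ (k : ℕ) (τ : ℝ), P2^[k] (HH M lam F) (τ, 0) = 0 := by
    intro k τ
    have hod := oneDim_vanish hδ₁ hδ₁ (slice_contDiffOn hHcd τ) (fun x hx => hHeq τ x hx) k
    exact (iteratedDeriv_slice hδ₁ hHcd τ k 0 (zero_mem_Ioo hδ₁)).symm.trans hod
  -- the inductive step: transport equation for the next transversal derivative
  have step : ∀ (k : ℕ) (τ : ℝ), (∀ j, j ≤ k → P2^[j] F (τ, 0) = 0) →
      P1 (P2^[k+1] F) (τ, 0) = 0 := by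
    intro k τ hj
    have h0 := hHk k τ
    rw [iterP2_HH hδ₁ hvU M lam k τ] at h0
    have A2 : (k:ℝ) * (((k-1:ℕ):ℝ) * P2^[k-1-1] (P2 (P2 F)) (τ, 0)) = 0 := by
      rcases Nat.lt_or_ge k 2 with hk | hk
      · interval_cases k <;> norm_num
      · obtain ⟨m, rfl⟩ := Nat.exists_eq_add_of_le hk
        have h1 : 2 + m - 1 - 1 = m := by omega
        have e : P2^[m] (P2 (P2 F)) (τ, 0) = P2^[m+2] F (τ, 0) := by
          conv_rhs => rw [Function.iterate_add_apply]
          rfl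
        rw [h1, e, hj (m+2) (by omega), mul_zero, mul_zero]
    have A3 : -(2*M) * ((k:ℝ) * (((k-1:ℕ):ℝ) * (((k-1-1:ℕ):ℝ)
        * P2^[k-1-1-1] (P2 (P2 F)) (τ, 0)))) = 0 := by
      rcases Nat.lt_or_ge k 3 with hk | hk
      · interval_cases k <;> norm_num
      · obtain ⟨m, rfl⟩ := Nat.exists_eq_add_of_le hk
        have h1 : 3 + m - 1 - 1 - 1 = m := by omega
        have e : P2^[m] (P2 (P2 F)) (τ, 0) = P2^[m+2] F (τ, 0) := by
          conv_rhs => rw [Function.iterate_add_apply]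
          rfl
        rw [h1, e, hj (m+2) (by omega), mul_zero, mul_zero, mul_zero, mul_zero]
    have A4 : 2 * ((k:ℝ) * P2^[k-1] (P2 F) (τ, 0)) = 0 := by
      rcases Nat.lt_or_ge k 1 with hk | hk
      · interval_cases k <;> norm_num
      · obtain ⟨m, rfl⟩ := Nat.exists_eq_add_of_le hk
        have h1 : 1 + m - 1 = m := by omega
        have e : P2^[m] (P2 F) (τ, 0) = P2^[m+1] F (τ, 0) := by
          conv_rhs => rw [Function.iterate_add_apply]
          rfl
        rw [h1, e, hj (m+1) (by omega), mul_zero, mul_zero]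
    have A5 : -(6*M) * ((k:ℝ) * (((k-1:ℕ):ℝ) * P2^[k-1-1] (P2 F) (τ, 0))) = 0 := by
      rcases Nat.lt_or_ge k 2 with hk | hk
      · interval_cases k <;> norm_num
      · obtain ⟨m, rfl⟩ := Nat.exists_eq_add_of_le hk
        have h1 : 2 + m - 1 - 1 = m := by omega
        have e : P2^[m] (P2 F) (τ, 0) = P2^[m+1] F (τ, 0) := by
          conv_rhs => rw [Function.iterate_add_apply]
          rfl
        rw [h1, e, hj (m+1) (by omega), mul_zero, mul_zero, mul_zero]
    have A6 : -(lam^2) * P2^[k] F (τ, 0) = 0 := by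
      rw [hj k le_rfl, mul_zero]
    have A7 : -(2*M) * ((k:ℝ) * P2^[k-1] F (τ, 0)) = 0 := by
      rcases Nat.lt_or_ge k 1 with hk | hk
      · interval_cases k <;> norm_num
      · obtain ⟨m, rfl⟩ := Nat.exists_eq_add_of_le hk
        have h1 : 1 + m - 1 = m := by omega
        rw [h1, hj m (by omega), mul_zero, mul_zero]
    rw [A2, A3, A4, A5, A6, A7] at h0
    linarith
  -- the main induction on the order of the transversal derivative
  have main : ∀ k : ℕ, ∀ j ≤ k, ∀ τ ≤ τ₀, P2^[j] F (τ, 0) = 0 := by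
    intro k
    induction k with
    | zero =>
      intro j hj τ hτ
      have hj0 : j = 0 := Nat.le_zero.1 hj
      subst hj0
      refine transport (g := fun σ => F (σ, 0)) ?_ ?_ hTτ₀ ?_ τ hτ
      · exact fun σ =>
          (hasDerivAt_slice1 (diffAt hO hvU (mem_strip (zero_mem_Ioo hδ₁)))).differentiableAt
      · intro σ hσ
        exact h1 σ hσ
      · intro σ hσ
        obtain ⟨ρ', hρ'pos, hvan⟩ := h2' σ hσ
        exact hvan 0 ⟨le_refl 0, hρ'pos⟩
    | succ k ih =>
      intro j hj τ hτ
      rcases Nat.lt_or_ge j (k+1) with hjk | hjk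
      · exact ih j (by omega) τ hτ
      · have hjeq : j = k+1 := le_antisymm hj hjk
        subst hjeq
        refine transport (g := fun σ => P2^[k+1] F (σ, 0)) ?_ ?_ hTτ₀ ?_ τ hτ
        · exact fun σ => (hasDerivAt_slice1 (diffAt hO (contDiffOn_iterP2 hO hvU (k+1))
            (mem_strip (zero_mem_Ioo hδ₁)))).differentiableAt
        · intro σ hσ
          rw [deriv_slice1 (diffAt hO (contDiffOn_iterP2 hO hvU (k+1))
            (mem_strip (zero_mem_Ioo hδ₁)))]
          exact step k σ (fun i hi => ih i hi σ hσ)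
        · intro σ hσ
          obtain ⟨ρ', hρ'pos, hvan⟩ := h2' σ hσ
          have hod := oneDim_vanish hδ₁ hρ'pos (slice_contDiffOn hvU σ)
            (fun x hx => hvan x hx) (k+1)
          exact (iteratedDeriv_slice hδ₁ hvU σ (k+1) 0 (zero_mem_Ioo hδ₁)).symm.trans hod
  intro k τ hτ
  exact (iteratedDeriv_slice hδ₁ hvU τ k 0 (zero_mem_Ioo hδ₁)).trans (main k k le_rfl τ hτ)
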